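/- Fix N ≥ 2, d ≥ max{63, 46N−79}, n ≥ 7d+14, and β ≥ 0. The map φ_{(2,β)}^N defined on partitions λ of n with parts in S_d^N satisfying p_1 + α < (N−2)p_2 and ⌊(p_1+p_5)/(d−N−1)⌋ = β, sending λ to the partition of n with multiplicities q_1 = p_1 + α + (p_2+ε)(d−2N−8)/2 + 28β + (26+N)ε, q_2 = 2β+ε, q_5 = p_5 + (p_2+ε)/2 − 2β − 2ε, and q_i = p_i for i ≠ 1,2,5 (with ε the parity of p_2), is a well-defined injection into partitions of n with parts in T_{5,d}. -/

import Mathlib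

/-- `rho A n` is the number of partitions of `n` all of whose parts lie in `A`. -/
noncomputable def rho (A : Set ℕ) (n : ℕ) : ℕ :=
  Nat.card {p : n.Partition // ∀ x ∈ p.parts, x ∈ A}

/-- `qpart a d n` is the number of partitions of `n` into parts that are all `≥ a`
and pairwise differ by at least `d` (so, in particular, are distinct when `d ≥ 1`). -/
noncomputable def qpart (a d n : ℕ) : ℕ :=
  Nat.card {p : n.Partition //
    (∀ x ∈ p.parts, a ≤ x) ∧
    (∀ x ∈ p.parts, p.parts.count x ≤ 1) ∧
    (∀ x ∈ p.parts, ∀ y ∈ p.parts, x ≠ y → d ≤ max x y - min x y)}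

/-- Positive integers congruent to `±a` modulo `m`, excluding `m - a`. -/
noncomputable def QminusSet (a m : ℕ) : Set ℕ :=
  {x | x % m = a % m ∨ x % m = (m - a) % m} \ {m - a}

/-- `Qminus a d n` counts partitions of `n` into parts `≡ ±a (mod d+3)`,
excluding the part `d+3-a`. -/
noncomputable def Qminus (a d n : ℕ) : ℕ := rho (QminusSet a (d + 3)) n

/-- `Qmm a d n` counts partitions of `n` into parts `≡ ±a (mod d+3)`,
excluding both the parts `a` and `d+3-a`. -/
noncomputable def Qmm (a d n : ℕ) : ℕ := rho (QminusSet a (d + 3) \ {a}) n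

/-- `Tset s d` is the set of naturals congruent to `1` or to `d + 2^j` for some
`1 ≤ j ≤ s - 1` modulo `2d`. -/
def Tset (s d : ℕ) : Set ℕ :=
  {y | y % (2 * d) = 1 % (2 * d) ∨
    ∃ j, 1 ≤ j ∧ j + 1 ≤ s ∧ y % (2 * d) = (d + 2 ^ j) % (2 * d)}

/-- `T5 d` : naturals congruent to `1, d+2, d+4, d+8` or `d+16` modulo `2d`. -/
def T5 (d : ℕ) : Set ℕ := Tset 5 d

/-- `Sset d N` : naturals congruent to `±1` modulo `d-N+3`, excluding `d-N+2`. -/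
def Sset (d N : ℕ) : Set ℕ :=
  {x | x % (d - N + 3) = 1 % (d - N + 3) ∨ x % (d - N + 3) = (d - N + 2) % (d - N + 3)}
    \ {d - N + 2}

/-- `xN d N i` is the `i`-th smallest element of `Sset d N` (1-indexed). -/
noncomputable def xN (d N i : ℕ) : ℕ := Nat.nth (· ∈ Sset d N) (i - 1)

/-- `yT d i` is the `i`-th smallest element of `T5 d` (1-indexed). -/
noncomputable def yT (d i : ℕ) : ℕ := Nat.nth (· ∈ T5 d) (i - 1)

/-- Multiplicity of the `i`-th smallest element of `Sset d N` in the partition `l`. -/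
noncomputable def pmul (d N n : ℕ) (l : n.Partition) (i : ℕ) : ℕ :=
  l.parts.count (xN d N i)

/-- `α = Σ_{i ≥ 3} (x_i^N - y_i) p_i` (all terms vanish for `i > n`). -/
noncomputable def alphaZ (d N n : ℕ) (l : n.Partition) : ℤ :=
  ∑ i ∈ Finset.Icc 3 n, ((xN d N i : ℤ) - (yT d i : ℤ)) * (pmul d N n l i : ℤ)

/-- `ε` is the parity of `p_2`. -/
noncomputable def eps (d N n : ℕ) (l : n.Partition) : ℕ := pmul d N n l 2 % 2

/-- The domain `S_{(2,β)}^N` of the map `φ_{(2,β)}^N`. -/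
noncomputable def inDomain (d N n β : ℕ) (l : n.Partition) : Prop :=
  (∀ x ∈ l.parts, x ∈ Sset d N) ∧
  (pmul d N n l 1 : ℤ) + alphaZ d N n l < ((N : ℤ) - 2) * (pmul d N n l 2 : ℤ) ∧
  (pmul d N n l 1 + pmul d N n l 5) / (d - N - 1) = β

/-- The prescribed multiplicity `q_i` of `y_i` in the image partition
(`(p_2+ε)(d-2N-8)/2` is computed as `((p_2+ε)/2) * (d-2N-8)`, exact since `p_2+ε` is even). -/
noncomputable def Qmult (d N n β : ℕ) (l : n.Partition) (i : ℕ) : ℤ :=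
  if i = 1 then
    (pmul d N n l 1 : ℤ) + alphaZ d N n l
      + (((pmul d N n l 2 + eps d N n l) / 2 : ℕ) : ℤ) * ((d : ℤ) - 2 * N - 8)
      + 28 * (β : ℤ) + (26 + (N : ℤ)) * (eps d N n l : ℤ)
  else if i = 2 then 2 * (β : ℤ) + (eps d N n l : ℤ)
  else if i = 5 then
    (pmul d N n l 5 : ℤ) + (((pmul d N n l 2 + eps d N n l) / 2 : ℕ) : ℤ)
      - 2 * (β : ℤ) - 2 * (eps d N n l : ℤ)
  else (pmul d N n l i : ℤ)

/-- explicit enumeration of `Sset` -/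
def Ff (m : ℕ) : ℕ → ℕ
  | 0 => 1
  | 1 => m + 1
  | 2 => 2 * m - 1
  | (n+3) => Ff m (n+1) + m

/-- explicit enumeration of `T5` -/
def Gg (d : ℕ) : ℕ → ℕ
  | 0 => 1
  | 1 => d + 2
  | 2 => d + 4
  | 3 => d + 8
  | 4 => d + 16
  | (n+5) => Gg d n + 2 * d

lemma Ff_step (m n : ℕ) : Ff m (n + 3) = Ff m (n + 1) + m := by rfl

lemma Gg_step (d n : ℕ) : Gg d (n + 5) = Gg d n + 2 * d := by rfl

lemma Ff_closed (m : ℕ) : ∀ q r, 1 ≤ r → Ff m (2 * q + r) = q * m + Ff m r := by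
  intro q
  induction q with
  | zero => simp
  | succ q ih =>
    intro r hr
    have h1 : 2 * (q + 1) + r = (2 * q + r) + 2 := by ring
    obtain ⟨r', rfl⟩ : ∃ r', r = r' + 1 := ⟨r - 1, by omega⟩
    have h2 : (2 * q + (r' + 1)) + 2 = (2 * q + r') + 3 := by ring
    rw [h1, h2, Ff_step, show 2 * q + r' + 1 = 2 * q + (r' + 1) by ring, ih _ hr]
    ring

lemma Gg_closed (d : ℕ) : ∀ q r, Gg d (5 * q + r) = 2 * d * q + Gg d r := by
  intro q
  induction q with
  | zero => simp
  | succ q ih =>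
    intro r
    have h1 : 5 * (q + 1) + r = (5 * q + r) + 5 := by ring
    rw [h1, Gg_step, ih]
    ring

lemma Ff_mono (m : ℕ) (hm : 4 ≤ m) : StrictMono (Ff m) := by
  have key : ∀ k, Ff m k < Ff m (k + 1) := by
    intro k
    induction k using Nat.strong_induction_on with
    | _ k ih =>
      match k with
      | 0 => show (1:ℕ) < m + 1; omega
      | 1 => show m + 1 < 2 * m - 1; omega
      | 2 => show 2 * m - 1 < Ff m 1 + m; show 2 * m - 1 < (m + 1) + m; omega
      | (k+3) =>
        show Ff m (k + 1) + m < Ff m (k + 2) + m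
        have h2 : Ff m (k + 1) < Ff m (k + 2) := ih (k + 1) (by omega)
        omega
  exact strictMono_nat_of_lt_succ key

lemma Gg_mono (d : ℕ) (hd : 17 ≤ d) : StrictMono (Gg d) := by
  have key : ∀ k, Gg d k < Gg d (k + 1) := by
    intro k
    induction k using Nat.strong_induction_on with
    | _ k ih =>
      match k with
      | 0 => show (1:ℕ) < d + 2; omega
      | 1 => show d + 2 < d + 4; omega
      | 2 => show d + 4 < d + 8; omega
      | 3 => show d + 8 < d + 16; omega
      | 4 => show d + 16 < Gg d 0 + 2 * d; show d + 16 < 1 + 2 * d; omega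
      | (k+5) =>
        show Gg d k + 2 * d < Gg d (k + 1) + 2 * d
        have h2 : Gg d k < Gg d (k + 1) := ih k (by omega)
        omega
  exact strictMono_nat_of_lt_succ key

lemma Ff_ge (m : ℕ) (hm : 4 ≤ m) : ∀ k, k + 1 ≤ Ff m k := by
  intro k
  induction k with
  | zero => exact le_rfl
  | succ k ih =>
    have h2 := Ff_mono m hm (show k < k + 1 by omega)
    omega

lemma Gg_pos (d : ℕ) (hd : 17 ≤ d) (k : ℕ) : 1 ≤ Gg d k := by
  have h := (Gg_mono d hd).monotone (Nat.zero_le k)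
  simpa [Gg] using h

lemma range_Ff (d N : ℕ) (hNd : N ≤ d) (hm : 4 ≤ d - N + 3) :
    Set.range (Ff (d - N + 3)) = Sset d N := by
  have hmdef : d - N + 3 = d - N + 3 := rfl
  generalize hmeq : d - N + 3 = m at hm ⊢
  have hm4 : 4 ≤ m := hm
  have hm2 : d - N + 2 = m - 1 := by omega
  have h1m : 1 % m = 1 := Nat.mod_eq_of_lt (by omega)
  have hm1m : (m - 1) % m = m - 1 := Nat.mod_eq_of_lt (by omega)
  have mod1 : ∀ q, (q * m + (m + 1)) % m = 1 := by
    intro q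
    have e : q * m + (m + 1) = 1 + (q + 1) * m := by ring
    rw [e, Nat.add_mul_mod_self_right, h1m]
  have modm : ∀ q, (q * m + (2 * m - 1)) % m = m - 1 := by
    intro q
    have e2 : (q + 1) * m = q * m + m := by ring
    have e : q * m + (2 * m - 1) = (m - 1) + (q + 1) * m := by omega
    rw [e, Nat.add_mul_mod_self_right, hm1m]
  ext x
  simp only [Sset, Set.mem_range, Set.mem_diff, Set.mem_setOf_eq, Set.mem_singleton_iff, hmeq,
    hm2, h1m, hm1m]
  constructor
  · rintro ⟨k, rfl⟩
    rcases Nat.eq_zero_or_pos k with rfl | hk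
    · exact ⟨Or.inl h1m, by show (1:ℕ) ≠ m - 1; omega⟩
    rcases Nat.even_or_odd k with ⟨q, hq⟩ | ⟨q, hq⟩
    · obtain ⟨q', rfl⟩ : ∃ q', q = q' + 1 := ⟨q - 1, by omega⟩
      have e : k = 2 * q' + 2 := by omega
      rw [e, Ff_closed m q' 2 (by omega)]
      have hv : Ff m 2 = 2 * m - 1 := rfl
      rw [hv]
      exact ⟨Or.inr (modm q'), by omega⟩
    · have e : k = 2 * q + 1 := by omega
      rw [e, Ff_closed m q 1 le_rfl]
      have hv : Ff m 1 = m + 1 := rfl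
      rw [hv]
      exact ⟨Or.inl (mod1 q), by omega⟩
  · rintro ⟨h1 | h2, hne⟩
    · have hx : x = m * (x / m) + 1 := by
        have := Nat.div_add_mod x m
        omega
      rcases Nat.eq_zero_or_pos (x / m) with hq | hq
      · refine ⟨0, ?_⟩
        rw [hq] at hx
        simpa [Ff] using hx.symm
      · obtain ⟨q', hq'⟩ : ∃ q', x / m = q' + 1 := ⟨x / m - 1, by omega⟩
        rw [hq'] at hx
        refine ⟨2 * q' + 1, ?_⟩
        rw [Ff_closed m q' 1 le_rfl]
        have hv : Ff m 1 = m + 1 := rfl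
        have e2 : m * (q' + 1) = q' * m + m := by ring
        rw [hv]
        omega
    · have hx : x = m * (x / m) + (m - 1) := by
        have := Nat.div_add_mod x m
        omega
      have hq : 1 ≤ x / m := by
        rcases Nat.eq_zero_or_pos (x / m) with hq | hq
        · exfalso; apply hne; rw [hq] at hx; omega
        · exact hq
      obtain ⟨q', hq'⟩ : ∃ q', x / m = q' + 1 := ⟨x / m - 1, by omega⟩
      rw [hq'] at hx
      refine ⟨2 * q' + 2, ?_⟩
      rw [Ff_closed m q' 2 (by omega)]
      have hv : Ff m 2 = 2 * m - 1 := rfl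
      have e2 : m * (q' + 1) = q' * m + m := by ring
      rw [hv]
      omega

lemma range_Gg (d : ℕ) (hd : 17 ≤ d) : Set.range (Gg d) = T5 d := by
  have h2d : ∀ c, c < 2 * d → c % (2 * d) = c := fun c hc => Nat.mod_eq_of_lt hc
  have hGsmall : ∀ r, r ≤ 4 →
      Gg d r < 2 * d ∧ (r = 0 → Gg d r = 1) ∧ (1 ≤ r → Gg d r = d + 2 ^ r) := by
    intro r hr
    interval_cases r <;> refine ⟨by norm_num [Gg]; omega, by norm_num [Gg], by norm_num [Gg]⟩
  ext y
  simp only [T5, Tset, Set.mem_range, Set.mem_setOf_eq]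
  constructor
  · rintro ⟨k, rfl⟩
    have hk : k = 5 * (k / 5) + k % 5 := by omega
    have hr5 : k % 5 ≤ 4 := by omega
    obtain ⟨hlt, h0, hj⟩ := hGsmall (k % 5) hr5
    have h16 : 2 ^ (k % 5) ≤ 16 := by
      calc 2 ^ (k % 5) ≤ 2 ^ 4 := Nat.pow_le_pow_right (by norm_num) hr5
      _ = 16 := by norm_num
    rw [hk, Gg_closed]
    have hmod : (2 * d * (k / 5) + Gg d (k % 5)) % (2 * d) = Gg d (k % 5) := by
      have e : 2 * d * (k / 5) + Gg d (k % 5) = Gg d (k % 5) + (k / 5) * (2 * d) := by ring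
      rw [e, Nat.add_mul_mod_self_right, h2d _ hlt]
    rcases Nat.eq_zero_or_pos (k % 5) with h | h
    · left
      rw [hmod, h2d 1 (by omega), h]
      rfl
    · right
      refine ⟨k % 5, h, by omega, ?_⟩
      rw [hmod, hj h, h2d (d + 2 ^ (k % 5)) (by omega)]
  · rintro (h1 | ⟨j, hj1, hj5, hjm⟩)
    · rw [h2d 1 (by omega)] at h1
      refine ⟨5 * (y / (2 * d)) + 0, ?_⟩
      rw [Gg_closed]
      have hv : Gg d 0 = 1 := rfl
      rw [hv]
      have := Nat.div_add_mod y (2 * d)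
      omega
    · have hj4 : j ≤ 4 := by omega
      have h2j : 2 ^ j ≤ 16 := by
        calc 2 ^ j ≤ 2 ^ 4 := Nat.pow_le_pow_right (by norm_num) hj4
        _ = 16 := by norm_num
      rw [h2d (d + 2 ^ j) (by omega)] at hjm
      refine ⟨5 * (y / (2 * d)) + j, ?_⟩
      rw [Gg_closed]
      obtain ⟨-, -, hjv⟩ := hGsmall j hj4
      rw [hjv hj1]
      have := Nat.div_add_mod y (2 * d)
      omega

lemma nth_Sset (d N : ℕ) (hNd : N ≤ d) (hm : 4 ≤ d - N + 3) :
    Nat.nth (· ∈ Sset d N) = Ff (d - N + 3) := by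
  have hmono := Ff_mono _ hm
  have hrange := range_Ff d N hNd hm
  have hinf : {x | x ∈ Sset d N}.Infinite := by
    show (Sset d N).Infinite
    rw [← hrange]
    exact Set.infinite_range_of_injective hmono.injective
  refine ((Nat.nth_strictMono hinf).range_inj hmono).mp ?_
  rw [Nat.range_nth_of_infinite hinf]
  exact hrange.symm

lemma nth_T5 (d : ℕ) (hd : 17 ≤ d) :
    Nat.nth (· ∈ T5 d) = Gg d := by
  have hmono := Gg_mono _ hd
  have hrange := range_Gg d hd
  have hinf : {y | y ∈ T5 d}.Infinite := by
    show (T5 d).Infinite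
    rw [← hrange]
    exact Set.infinite_range_of_injective hmono.injective
  refine ((Nat.nth_strictMono hinf).range_inj hmono).mp ?_
  rw [Nat.range_nth_of_infinite hinf]
  exact hrange.symm

lemma FG_cmp (d N : ℕ) (hN : 2 ≤ N) (hd : 63 ≤ d) (hdN : 46 * N ≤ d + 79) :
    ∀ k, 2 ≤ k → Gg d k + N ≤ Ff (d - N + 3) k + 2 := by
  intro k
  induction k using Nat.strong_induction_on with
  | _ k ih =>
    intro hk
    by_cases h12 : k ≤ 11
    · interval_cases k <;> simp [Ff, Gg] <;> omega
    · have hk1 : 1 ≤ k - 10 := by omega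
      have e : 2 * 5 + (k - 10) = k := by omega
      have e' : 5 * 2 + (k - 10) = k := by omega
      have hF := Ff_closed (d - N + 3) 5 (k - 10) hk1
      have hG := Gg_closed d 2 (k - 10)
      rw [e] at hF
      rw [e'] at hG
      have hih := ih (k - 10) (by omega) (by omega)
      omega


lemma multiset_sum_sum {ι : Type*} (s : Finset ι) (f : ι → Multiset ℕ) :
    (∑ i ∈ s, f i).sum = ∑ i ∈ s, (f i).sum := by
  classical
  induction s using Finset.induction with
  | empty => simp
  | insert _ _ h ih => rw [Finset.sum_insert h, Finset.sum_insert h, Multiset.sum_add, ih]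

lemma sum_split {M : Type*} [AddCommMonoid M] (n : ℕ) (hn : 3 ≤ n) (f : ℕ → M) :
    ∑ i ∈ Finset.Icc 1 n, f i = f 1 + f 2 + ∑ i ∈ Finset.Icc 3 n, f i := by
  have h : Finset.Icc 1 n = insert 1 (insert 2 (Finset.Icc 3 n)) := by
    ext i
    simp only [Finset.mem_Icc, Finset.mem_insert]
    omega
  rw [h, Finset.sum_insert (by simp only [Finset.mem_insert, Finset.mem_Icc]; omega),
    Finset.sum_insert (by simp only [Finset.mem_Icc]; omega), add_assoc]

lemma parts_le (n : ℕ) (l : n.Partition) : ∀ x ∈ l.parts, x ≤ n := by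
  intro x hx
  have := Multiset.single_le_sum (fun (y : ℕ) _ => Nat.zero_le y) x hx
  rw [l.parts_sum] at this
  exact this

lemma xN_eq (d N : ℕ) (hNd : N ≤ d) (hm4 : 4 ≤ d - N + 3) (i : ℕ) :
    xN d N i = Ff (d - N + 3) (i - 1) := by
  unfold xN
  rw [nth_Sset d N hNd hm4]

lemma yT_eq (d : ℕ) (hd : 17 ≤ d) (i : ℕ) : yT d i = Gg d (i - 1) := by
  unfold yT
  rw [nth_T5 d hd]

lemma weight_eq (d N n : ℕ) (hNd : N ≤ d) (hm4 : 4 ≤ d - N + 3) (l : n.Partition)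
    (hl : ∀ x ∈ l.parts, x ∈ Sset d N) :
    ∑ i ∈ Finset.Icc 1 n, pmul d N n l i * xN d N i = n := by
  classical
  have hmono := Ff_mono _ hm4
  have hxe := xN_eq d N hNd hm4
  have hsum : ∑ x ∈ l.parts.toFinset, l.parts.count x * x = n := by
    have h := Finset.sum_multiset_map_count l.parts id
    rw [Multiset.map_id] at h
    rw [l.parts_sum] at h
    simpa [smul_eq_mul] using h.symm
  have hinj : ∀ i ∈ Finset.Icc 1 n, ∀ j ∈ Finset.Icc 1 n, xN d N i = xN d N j → i = j := by
    intro i hi j hj hij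
    rw [hxe, hxe] at hij
    have := hmono.injective hij
    rw [Finset.mem_Icc] at hi hj
    omega
  have himg : l.parts.toFinset ⊆ (Finset.Icc 1 n).image (fun i => xN d N i) := by
    intro x hx
    rw [Multiset.mem_toFinset] at hx
    obtain ⟨k, hk⟩ : ∃ k, Ff (d - N + 3) k = x := by
      have hxS : x ∈ Sset d N := hl x hx
      rw [← range_Ff d N hNd hm4] at hxS
      exact hxS
    refine Finset.mem_image.mpr ⟨k + 1, ?_, ?_⟩
    · rw [Finset.mem_Icc]
      have h1 := Ff_ge _ hm4 k
      have h2 := parts_le n l x hx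
      omega
    · rw [hxe]
      simpa using hk
  calc ∑ i ∈ Finset.Icc 1 n, pmul d N n l i * xN d N i
      = ∑ v ∈ (Finset.Icc 1 n).image (fun i => xN d N i), l.parts.count v * v := by
        rw [Finset.sum_image hinj]
        rfl
    _ = ∑ v ∈ l.parts.toFinset, l.parts.count v * v := by
        refine (Finset.sum_subset himg ?_).symm
        intro x _ hnx
        have hc : l.parts.count x = 0 := by
          rw [Multiset.count_eq_zero]
          intro hmem
          exact hnx (Multiset.mem_toFinset.mpr hmem)
        rw [hc, Nat.zero_mul]
    _ = n := hsum


theorem stmt19 (N d n β : ℕ) (hN : 2 ≤ N) (hd : max 63 (46 * N - 79) ≤ d)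
    (hn : 7 * d + 14 ≤ n) :
    (∀ l : n.Partition, inDomain d N n β l →
      ∃ μ : n.Partition, (∀ x ∈ μ.parts, x ∈ T5 d) ∧
        ∀ i, 1 ≤ i → (μ.parts.count (yT d i) : ℤ) = Qmult d N n β l i) ∧
    (∀ l l' : n.Partition, inDomain d N n β l → inDomain d N n β l' →
      (∀ i, 1 ≤ i → Qmult d N n β l i = Qmult d N n β l' i) → l = l') := by
  classical
  have hd1 : 63 ≤ d := le_trans (le_max_left _ _) hd
  have hd2 : 46 * N ≤ d + 79 := by
    have := le_trans (le_max_right _ _) hd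
    omega
  have hNd : N ≤ d := by omega
  have hm4 : 4 ≤ d - N + 3 := by omega
  have hd17 : 17 ≤ d := by omega
  have hn5 : 5 ≤ n := by omega
  have hxe := xN_eq d N hNd hm4
  have hye := yT_eq d hd17
  have hFmono := Ff_mono _ hm4
  have hGmono := Gg_mono _ hd17
  have hx1 : xN d N 1 = 1 := by rw [hxe]; rfl
  have hx2 : xN d N 2 = (d - N + 3) + 1 := by rw [hxe]; rfl
  have hx5 : xN d N 5 = 2 * (d - N + 3) - 1 + (d - N + 3) := by rw [hxe]; rfl
  have hy1 : yT d 1 = 1 := by rw [hye]; rfl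
  have hy2 : yT d 2 = d + 2 := by rw [hye]; rfl
  have hy5 : yT d 5 = d + 16 := by rw [hye]; rfl
  have hx2Z : ((xN d N 2 : ℕ) : ℤ) = (d : ℤ) - N + 4 := by rw [hx2]; omega
  have hx5Z : ((xN d N 5 : ℕ) : ℤ) = 3 * (d : ℤ) - 3 * N + 8 := by rw [hx5]; omega
  have hcmp : ∀ i, 3 ≤ i → (yT d i : ℤ) + N ≤ (xN d N i : ℤ) + 2 := by
    intro i hi
    have h := FG_cmp d N hN hd1 hd2 (i - 1) (by omega)
    rw [hxe i, hye i]
    omega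
  have h5mem : (5:ℕ) ∈ Finset.Icc 3 n := by rw [Finset.mem_Icc]; omega
  have hyinj : ∀ i j, 1 ≤ i → 1 ≤ j → yT d i = yT d j → i = j := by
    intro i j hi hj hij
    rw [hye, hye] at hij
    have := hGmono.injective hij
    omega
  -- bundled facts about partitions in the domain
  have key : ∀ l : n.Partition, inDomain d N n β l →
      0 ≤ alphaZ d N n l ∧
      3 ≤ N ∧ 1 ≤ pmul d N n l 2 ∧
      2 * β + 2 * eps d N n l ≤ pmul d N n l 5 + (pmul d N n l 2 + eps d N n l) / 2 := by
    intro l hdom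
    obtain ⟨hparts, hlt, hfloor⟩ := hdom
    have hterm_nonneg : ∀ i ∈ Finset.Icc 3 n,
        0 ≤ ((xN d N i : ℤ) - (yT d i : ℤ)) * (pmul d N n l i : ℤ) := by
      intro i hi
      rw [Finset.mem_Icc] at hi
      have h := hcmp i hi.1
      have hc : (0:ℤ) ≤ (xN d N i : ℤ) - yT d i := by omega
      exact mul_nonneg hc (Int.natCast_nonneg _)
    have halpha : 0 ≤ alphaZ d N n l := Finset.sum_nonneg hterm_nonneg
    have hterm5 : ((xN d N 5 : ℤ) - yT d 5) * pmul d N n l 5 ≤ alphaZ d N n l :=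
      Finset.single_le_sum hterm_nonneg h5mem
    have hppos : (0:ℤ) < ((N:ℤ) - 2) * pmul d N n l 2 :=
      lt_of_le_of_lt (add_nonneg (Int.natCast_nonneg _) halpha) hlt
    have hN3 : 3 ≤ N := by
      by_contra h
      have hN2 : N = 2 := by omega
      rw [hN2] at hppos
      norm_num at hppos
    have hp2pos : 1 ≤ pmul d N n l 2 := by
      by_contra h
      have h0 : pmul d N n l 2 = 0 := by omega
      rw [h0] at hppos
      norm_num at hppos
    refine ⟨halpha, hN3, hp2pos, ?_⟩
    have hx5y5 : (xN d N 5 : ℤ) - yT d 5 = 2 * (d:ℤ) - 3 * N - 8 := by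
      rw [hx5, hy5]; omega
    have heps : eps d N n l ≤ 1 := by unfold eps; omega
    have h2h : 2 * ((pmul d N n l 2 + eps d N n l) / 2) = pmul d N n l 2 + eps d N n l := by
      unfold eps; omega
    rcases Nat.eq_zero_or_pos β with hb0 | hbpos
    · rcases Nat.eq_zero_or_pos (eps d N n l) with he0 | hepos
      · rw [hb0, he0]; omega
      · have he1 : eps d N n l = 1 := by omega
        have hodd : pmul d N n l 2 % 2 = 1 := by
          have : eps d N n l = pmul d N n l 2 % 2 := rfl
          omega
        by_cases h3 : 3 ≤ pmul d N n l 2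
        · rw [hb0, he1]; omega
        · exfalso
          have hp21 : pmul d N n l 2 = 1 := by omega
          rw [hp21] at hlt
          have hlt' : (pmul d N n l 1 : ℤ) + alphaZ d N n l < (N:ℤ) - 2 := by
            push_cast at hlt
            linarith
          have hzero : ∀ i ∈ Finset.Icc 3 n, pmul d N n l i * xN d N i = 0 := by
            intro i hi
            have hterm : ((xN d N i : ℤ) - yT d i) * pmul d N n l i ≤ alphaZ d N n l :=
              Finset.single_le_sum hterm_nonneg hi
            rw [Finset.mem_Icc] at hi
            have hi3 := hcmp i hi.1
            have hpz : pmul d N n l i = 0 := by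
              by_contra hpnz
              have hp1 : (1:ℤ) ≤ pmul d N n l i := by
                have h' : 1 ≤ pmul d N n l i := by omega
                exact_mod_cast h'
              have hxy : ((N:ℤ) - 2) ≤ (xN d N i : ℤ) - yT d i := by omega
              have hmm : ((N:ℤ) - 2) * 1 ≤ ((xN d N i : ℤ) - yT d i) * pmul d N n l i :=
                mul_le_mul hxy hp1 (by norm_num) (by omega)
              have hp1nn := Int.natCast_nonneg (pmul d N n l 1)
              linarith
            rw [hpz, Nat.zero_mul]
          have hw := weight_eq d N n hNd hm4 l hparts
          rw [sum_split n (by omega) (fun i => pmul d N n l i * xN d N i)] at hw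
          rw [Finset.sum_eq_zero hzero] at hw
          rw [hx1, hx2, hp21] at hw
          have hp1N : pmul d N n l 1 + 2 ≤ N := by
            have hann := halpha
            omega
          omega
    · have hc : ((d - N - 1 : ℕ) : ℤ) = (d:ℤ) - N - 1 := by omega
      have hbeta_le : β * (d - N - 1) ≤ pmul d N n l 1 + pmul d N n l 5 := by
        rw [← hfloor]
        exact Nat.div_mul_le_self _ _
      have hp15 : (pmul d N n l 1 : ℤ) + pmul d N n l 5 < ((N:ℤ) - 2) * pmul d N n l 2 := by
        rw [hx5y5] at hterm5
        have h1 : (pmul d N n l 5 : ℤ) ≤ (2 * (d:ℤ) - 3 * N - 8) * pmul d N n l 5 :=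
          le_mul_of_one_le_left (Int.natCast_nonneg _) (by omega)
        linarith
      have hβZ : ((β:ℤ)) * ((d:ℤ) - N - 1) ≤ (pmul d N n l 1 : ℤ) + pmul d N n l 5 := by
        rw [← hc]
        exact_mod_cast hbeta_le
      have hd45 : 45 * ((N:ℤ) - 2) ≤ (d:ℤ) - N - 1 := by omega
      have h45 : 45 * (β:ℤ) < pmul d N n l 2 := by
        have hb1 : (0:ℤ) ≤ (β:ℤ) := Int.natCast_nonneg β
        have s1 : 45 * ((N:ℤ) - 2) * β ≤ ((d:ℤ) - N - 1) * β :=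
          mul_le_mul_of_nonneg_right hd45 hb1
        have s2 : ((d:ℤ) - N - 1) * β ≤ (pmul d N n l 1 : ℤ) + pmul d N n l 5 := by
          rw [mul_comm]; exact hβZ
        have s4 : ((N:ℤ) - 2) * (45 * β) < ((N:ℤ) - 2) * pmul d N n l 2 := by
          have : 45 * ((N:ℤ) - 2) * β < ((N:ℤ) - 2) * pmul d N n l 2 := by linarith
          calc ((N:ℤ) - 2) * (45 * β) = 45 * ((N:ℤ) - 2) * β := by ring
          _ < _ := this
        exact lt_of_mul_lt_mul_left s4 (by omega)
      have h45' : 45 * β < pmul d N n l 2 := by exact_mod_cast h45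
      omega
  have hx1Z : ((xN d N 1 : ℕ) : ℤ) = 1 := by rw [hx1]; norm_num
  have hy1Z : ((yT d 1 : ℕ) : ℤ) = 1 := by rw [hy1]; norm_num
  have hy2Z : ((yT d 2 : ℕ) : ℤ) = (d : ℤ) + 2 := by rw [hy2]; push_cast; ring
  have hy5Z : ((yT d 5 : ℕ) : ℤ) = (d : ℤ) + 16 := by rw [hy5]; push_cast; ring
  constructor
  · intro l hdom
    obtain ⟨halpha, hN3, hp2pos, hq5⟩ := key l hdom
    obtain ⟨hparts, hlt, hfloor⟩ := hdom
    have h2h : 2 * ((pmul d N n l 2 + eps d N n l) / 2) = pmul d N n l 2 + eps d N n l := by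
      unfold eps; omega
    have h2hZ : 2 * ((((pmul d N n l 2 + eps d N n l) / 2 : ℕ)) : ℤ)
        = (pmul d N n l 2 : ℤ) + (eps d N n l : ℤ) := by exact_mod_cast h2h
    have hQnn : ∀ i, 0 ≤ Qmult d N n β l i := by
      intro i
      unfold Qmult
      split_ifs with h1 h2 h5
      · have hd28 : (0:ℤ) ≤ (d:ℤ) - 2 * N - 8 := by omega
        have t1 : (0:ℤ) ≤ (((pmul d N n l 2 + eps d N n l) / 2 : ℕ) : ℤ) * ((d:ℤ) - 2 * N - 8) :=
          mul_nonneg (Int.natCast_nonneg _) hd28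
        have t2 : (0:ℤ) ≤ 28 * (β:ℤ) := by positivity
        have t3 : (0:ℤ) ≤ (26 + (N:ℤ)) * (eps d N n l : ℤ) := by positivity
        have t4 := Int.natCast_nonneg (pmul d N n l 1)
        linarith
      · omega
      · omega
      · exact Int.natCast_nonneg _
    have hqZ : ∀ i, ((Qmult d N n β l i).toNat : ℤ) = Qmult d N n β l i :=
      fun i => Int.toNat_of_nonneg (hQnn i)
    refine ⟨⟨∑ i ∈ Finset.Icc 1 n, Multiset.replicate (Qmult d N n β l i).toNat (yT d i),
      ?_, ?_⟩, ?_, ?_⟩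
    · intro x hx
      rw [Multiset.mem_sum] at hx
      obtain ⟨i, hi, hxi⟩ := hx
      have hxeq := Multiset.eq_of_mem_replicate hxi
      subst hxeq
      rw [hye]
      exact Gg_pos d hd17 _
    · rw [multiset_sum_sum]
      have hterm : ∀ i ∈ Finset.Icc 1 n,
          (Multiset.replicate (Qmult d N n β l i).toNat (yT d i)).sum
          = (Qmult d N n β l i).toNat * yT d i := by
        intro i _
        rw [Multiset.sum_replicate, smul_eq_mul]
      rw [Finset.sum_congr rfl hterm]
      have hZ : ((∑ i ∈ Finset.Icc 1 n, (Qmult d N n β l i).toNat * yT d i : ℕ) : ℤ)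
          = (n : ℤ) := by
        rw [Nat.cast_sum]
        have hs : ∀ i ∈ Finset.Icc 1 n,
            (((Qmult d N n β l i).toNat * yT d i : ℕ) : ℤ)
            = Qmult d N n β l i * (yT d i : ℤ) := by
          intro i _
          rw [Nat.cast_mul, hqZ]
        rw [Finset.sum_congr rfl hs]
        have hw := weight_eq d N n hNd hm4 l hparts
        have hwZ : ∑ i ∈ Finset.Icc 1 n,
            (pmul d N n l i : ℤ) * (xN d N i : ℤ) = ((n : ℕ) : ℤ) := by
          have := congrArg (fun t : ℕ => (t : ℤ)) hw
          push_cast at this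
          exact this
        rw [sum_split n (by omega) (fun i => (pmul d N n l i : ℤ) * (xN d N i : ℤ)),
          ← Finset.add_sum_erase _ _ h5mem] at hwZ
        rw [sum_split n (by omega) (fun i => Qmult d N n β l i * (yT d i : ℤ)),
          ← Finset.add_sum_erase _ _ h5mem]
        have hQer : ∀ i ∈ (Finset.Icc 3 n).erase 5,
            Qmult d N n β l i * (yT d i : ℤ) = (pmul d N n l i : ℤ) * (yT d i : ℤ) := by
          intro i hi
          rw [Finset.mem_erase, Finset.mem_Icc] at hi
          unfold Qmult
          rw [if_neg (by omega), if_neg (by omega), if_neg hi.1]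
        rw [Finset.sum_congr rfl hQer]
        have halphasplit : alphaZ d N n l =
            ((xN d N 5 : ℤ) - yT d 5) * pmul d N n l 5 +
              ∑ i ∈ (Finset.Icc 3 n).erase 5,
                ((xN d N i : ℤ) - yT d i) * pmul d N n l i := by
          unfold alphaZ
          rw [← Finset.add_sum_erase _ _ h5mem]
        have hsubd : ∑ i ∈ (Finset.Icc 3 n).erase 5,
              ((xN d N i : ℤ) - yT d i) * pmul d N n l i
            = ∑ i ∈ (Finset.Icc 3 n).erase 5, (pmul d N n l i : ℤ) * xN d N i
              - ∑ i ∈ (Finset.Icc 3 n).erase 5, (pmul d N n l i : ℤ) * yT d i := by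
          rw [← Finset.sum_sub_distrib]
          exact Finset.sum_congr rfl (fun i _ => by ring)
        have hQ1 : Qmult d N n β l 1 = (pmul d N n l 1 : ℤ) + alphaZ d N n l
            + (((pmul d N n l 2 + eps d N n l) / 2 : ℕ) : ℤ) * ((d : ℤ) - 2 * N - 8)
            + 28 * (β : ℤ) + (26 + (N : ℤ)) * (eps d N n l : ℤ) := by
          unfold Qmult; rw [if_pos rfl]
        have hQ2 : Qmult d N n β l 2 = 2 * (β : ℤ) + (eps d N n l : ℤ) := by
          unfold Qmult; rw [if_neg (by norm_num), if_pos rfl]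
        have hQ5 : Qmult d N n β l 5 = (pmul d N n l 5 : ℤ)
            + (((pmul d N n l 2 + eps d N n l) / 2 : ℕ) : ℤ)
            - 2 * (β : ℤ) - 2 * (eps d N n l : ℤ) := by
          unfold Qmult; rw [if_neg (by norm_num), if_neg (by norm_num), if_pos rfl]
        rw [hx1Z, hx2Z, hx5Z] at hwZ
        rw [hQ1, hQ2, hQ5, halphasplit, hsubd, hx5Z, hy1Z, hy2Z, hy5Z]
        linear_combination hwZ + ((d:ℤ) - N + 4) * h2hZ
      exact_mod_cast hZ
    · intro x hx
      rw [Multiset.mem_sum] at hx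
      obtain ⟨i, hi, hxi⟩ := hx
      have hxeq := Multiset.eq_of_mem_replicate hxi
      subst hxeq
      rw [hye]
      rw [← range_Gg d hd17]
      exact ⟨i - 1, rfl⟩
    · intro i hi
      show ((Multiset.count (yT d i) (∑ j ∈ Finset.Icc 1 n,
        Multiset.replicate (Qmult d N n β l j).toNat (yT d j)) : ℕ) : ℤ) = Qmult d N n β l i
      rw [Multiset.count_sum']
      by_cases hin : i ≤ n
      · rw [Finset.sum_eq_single_of_mem i (by rw [Finset.mem_Icc]; omega)
          (fun j hj hne => by
            rw [Multiset.count_replicate, if_neg]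
            intro he
            rw [Finset.mem_Icc] at hj
            exact hne (hyinj j i hj.1 (by omega) he))]
        rw [Multiset.count_replicate, if_pos rfl]
        exact hqZ i
      · have hz : ∀ j ∈ Finset.Icc 1 n,
            Multiset.count (yT d i)
              (Multiset.replicate (Qmult d N n β l j).toNat (yT d j)) = 0 := by
          intro j hj
          rw [Finset.mem_Icc] at hj
          rw [Multiset.count_replicate, if_neg]
          intro he
          have := hyinj j i hj.1 (by omega) he
          omega
        rw [Finset.sum_eq_zero hz]
        have hiq : Qmult d N n β l i = (pmul d N n l i : ℤ) := by
          unfold Qmult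
          rw [if_neg (by omega), if_neg (by omega), if_neg (by omega)]
        rw [hiq]
        have hp0 : pmul d N n l i = 0 := by
          unfold pmul
          rw [Multiset.count_eq_zero]
          intro hmem
          have hle := parts_le n l _ hmem
          have hge : i ≤ xN d N i := by
            rw [hxe]
            have := Ff_ge _ hm4 (i - 1)
            omega
          omega
        rw [hp0]
  · intro l l' hdom hdom' hQeq
    obtain ⟨halpha, hN3, hp2pos, -⟩ := key l hdom
    obtain ⟨hpa, hlt, hfloor⟩ := hdom
    obtain ⟨hpa', hlt', hfloor'⟩ := hdom'
    have hQ2form : ∀ l0 : n.Partition, Qmult d N n β l0 2 = 2 * (β : ℤ) + (eps d N n l0 : ℤ) := by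
      intro l0; unfold Qmult; rw [if_neg (by norm_num), if_pos rfl]
    have hQ5form : ∀ l0 : n.Partition, Qmult d N n β l0 5 = (pmul d N n l0 5 : ℤ)
        + (((pmul d N n l0 2 + eps d N n l0) / 2 : ℕ) : ℤ)
        - 2 * (β : ℤ) - 2 * (eps d N n l0 : ℤ) := by
      intro l0; unfold Qmult; rw [if_neg (by norm_num), if_neg (by norm_num), if_pos rfl]
    have hoff : ∀ i, 1 ≤ i → i ≠ 1 → i ≠ 2 → i ≠ 5 → pmul d N n l i = pmul d N n l' i := by
      intro i hi h1 h2 h5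
      have h := hQeq i hi
      unfold Qmult at h
      rw [if_neg h1, if_neg h2, if_neg h5, if_neg h1, if_neg h2, if_neg h5] at h
      exact_mod_cast h
    have hepseq : eps d N n l = eps d N n l' := by
      have h := hQeq 2 (by omega)
      rw [hQ2form, hQ2form] at h
      omega
    have h5e := hQeq 5 (by omega)
    rw [hQ5form, hQ5form, hepseq] at h5e
    have hP5Z : (pmul d N n l 5 : ℤ) + (((pmul d N n l 2 + eps d N n l') / 2 : ℕ) : ℤ)
        = (pmul d N n l' 5 : ℤ) + (((pmul d N n l' 2 + eps d N n l') / 2 : ℕ) : ℤ) := by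
      linarith
    have h2hZ : 2 * ((((pmul d N n l 2 + eps d N n l') / 2 : ℕ)) : ℤ)
        = (pmul d N n l 2 : ℤ) + (eps d N n l' : ℤ) := by
      have : 2 * ((pmul d N n l 2 + eps d N n l') / 2) = pmul d N n l 2 + eps d N n l' := by
        have he : eps d N n l = eps d N n l' := hepseq
        unfold eps at he ⊢
        omega
      exact_mod_cast this
    have h2hZ' : 2 * ((((pmul d N n l' 2 + eps d N n l') / 2 : ℕ)) : ℤ)
        = (pmul d N n l' 2 : ℤ) + (eps d N n l' : ℤ) := by
      have : 2 * ((pmul d N n l' 2 + eps d N n l') / 2) = pmul d N n l' 2 + eps d N n l' := by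
        unfold eps
        omega
      exact_mod_cast this
    -- weight equations
    have hw := weight_eq d N n hNd hm4 l hpa
    have hw' := weight_eq d N n hNd hm4 l' hpa'
    have hwZ : ∑ i ∈ Finset.Icc 1 n, (pmul d N n l i : ℤ) * (xN d N i : ℤ) = ((n:ℕ) : ℤ) := by
      have := congrArg (fun t : ℕ => (t : ℤ)) hw
      push_cast at this
      exact this
    have hwZ' : ∑ i ∈ Finset.Icc 1 n, (pmul d N n l' i : ℤ) * (xN d N i : ℤ) = ((n:ℕ) : ℤ) := by
      have := congrArg (fun t : ℕ => (t : ℤ)) hw'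
      push_cast at this
      exact this
    rw [sum_split n (by omega) (fun i => (pmul d N n l i : ℤ) * (xN d N i : ℤ)),
      ← Finset.add_sum_erase _ _ h5mem] at hwZ
    rw [sum_split n (by omega) (fun i => (pmul d N n l' i : ℤ) * (xN d N i : ℤ)),
      ← Finset.add_sum_erase _ _ h5mem] at hwZ'
    have hSX : ∑ i ∈ (Finset.Icc 3 n).erase 5, (pmul d N n l i : ℤ) * (xN d N i : ℤ)
        = ∑ i ∈ (Finset.Icc 3 n).erase 5, (pmul d N n l' i : ℤ) * (xN d N i : ℤ) :=
      Finset.sum_congr rfl (fun i hi => by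
        rw [Finset.mem_erase, Finset.mem_Icc] at hi
        rw [hoff i (by omega) (by omega) (by omega) hi.1])
    have hEW := hwZ.trans hwZ'.symm
    rw [hSX, hx1Z, hx2Z, hx5Z] at hEW
    have hkey : (pmul d N n l 1 : ℤ) + pmul d N n l 5
        = (pmul d N n l' 1 : ℤ) + pmul d N n l' 5
          + ((((pmul d N n l 2 + eps d N n l') / 2 : ℕ) : ℤ)
            - (((pmul d N n l' 2 + eps d N n l') / 2 : ℕ) : ℤ)) * ((d:ℤ) - N - 1) := by
      linear_combination hEW - (3*(d:ℤ) - 3*N + 7) * hP5Z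
        + ((d:ℤ) - N + 4) * h2hZ - ((d:ℤ) - N + 4) * h2hZ'
    have hD1 : 1 ≤ d - N - 1 := by omega
    have hstep : ∀ u v : ℕ, u + (d - N - 1) ≤ v →
        u / (d - N - 1) < v / (d - N - 1) := by
      intro u v huv
      have h1 : (u + (d - N - 1)) / (d - N - 1) = u / (d - N - 1) + 1 :=
        Nat.add_div_right u hD1
      have h2 := Nat.div_le_div_right (c := d - N - 1) huv
      omega
    have hfl : (pmul d N n l 1 + pmul d N n l 5) / (d - N - 1)
        = (pmul d N n l' 1 + pmul d N n l' 5) / (d - N - 1) := by rw [hfloor, hfloor']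
    have hteq : (((pmul d N n l 2 + eps d N n l') / 2 : ℕ) : ℤ)
        = (((pmul d N n l' 2 + eps d N n l') / 2 : ℕ) : ℤ) := by
      by_contra hne
      rcases lt_or_gt_of_ne hne with hlt2 | hlt2
      · have ht1 : (((pmul d N n l 2 + eps d N n l') / 2 : ℕ) : ℤ)
            - (((pmul d N n l' 2 + eps d N n l') / 2 : ℕ) : ℤ) ≤ -1 := by omega
        have hmul : ((((pmul d N n l 2 + eps d N n l') / 2 : ℕ) : ℤ)
            - (((pmul d N n l' 2 + eps d N n l') / 2 : ℕ) : ℤ)) * ((d:ℤ) - N - 1)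
            ≤ -1 * ((d:ℤ) - N - 1) := mul_le_mul_of_nonneg_right ht1 (by omega)
        have hAA : pmul d N n l 1 + pmul d N n l 5 + (d - N - 1)
            ≤ pmul d N n l' 1 + pmul d N n l' 5 := by
          have := hkey
          omega
        have := hstep _ _ hAA
        omega
      · have ht1 : (1:ℤ) ≤ (((pmul d N n l 2 + eps d N n l') / 2 : ℕ) : ℤ)
            - (((pmul d N n l' 2 + eps d N n l') / 2 : ℕ) : ℤ) := by omega
        have hmul : 1 * ((d:ℤ) - N - 1)
            ≤ ((((pmul d N n l 2 + eps d N n l') / 2 : ℕ) : ℤ)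
            - (((pmul d N n l' 2 + eps d N n l') / 2 : ℕ) : ℤ)) * ((d:ℤ) - N - 1) :=
          mul_le_mul_of_nonneg_right ht1 (by omega)
        have hAA : pmul d N n l' 1 + pmul d N n l' 5 + (d - N - 1)
            ≤ pmul d N n l 1 + pmul d N n l 5 := by
          have := hkey
          omega
        have := hstep _ _ hAA
        omega
    rw [hteq] at hkey
    simp only [sub_self, zero_mul, add_zero] at hkey
    have hp2eq : pmul d N n l 2 = pmul d N n l' 2 := by omega
    have hp5eq : pmul d N n l 5 = pmul d N n l' 5 := by omega
    have hp1eq : pmul d N n l 1 = pmul d N n l' 1 := by omega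
    apply Nat.Partition.ext
    apply Multiset.ext.mpr
    intro a
    by_cases ha : a ∈ Sset d N
    · obtain ⟨k, rfl⟩ : ∃ k, Ff (d - N + 3) k = a := by
        rw [← range_Ff d N hNd hm4] at ha
        exact ha
      have hxk : xN d N (k + 1) = Ff (d - N + 3) k := by
        rw [hxe]
        norm_num
      have hcount : ∀ l0 : n.Partition,
          Multiset.count (Ff (d - N + 3) k) l0.parts = pmul d N n l0 (k + 1) := by
        intro l0
        unfold pmul
        rw [hxk]
      rw [hcount l, hcount l']
      by_cases e1 : k + 1 = 1
      · rw [e1]; exact hp1eq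
      by_cases e2 : k + 1 = 2
      · rw [e2]; exact hp2eq
      by_cases e5 : k + 1 = 5
      · rw [e5]; exact hp5eq
      exact hoff (k + 1) (by omega) e1 e2 e5
    · rw [Multiset.count_eq_zero_of_notMem (fun hmem => ha (hpa _ hmem)),
        Multiset.count_eq_zero_of_notMem (fun hmem => ha (hpa' _ hmem))]
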